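/- Define g : [0, π) → [0, π) by g(z) = arccos( ((π − z) cos z + sin z)/π ). Then, as z → 0 from the right, g(z) = z − z²/(3π) + o(z²); that is, the function z ↦ g(z) − (z − z²/(3π)) is o(z²) as z → 0⁺. -/

import Mathlib

open Asymptotics

set_option maxHeartbeats 1000000

/-- The layer-to-layer embedding-angle map of an infinitely wide ReLU network:
`g z = arccos(((π − z) cos z + sin z)/π)`. -/
noncomputable def g (z : ℝ) : ℝ :=
  Real.arccos (((Real.pi - z) * Real.cos z + Real.sin z) / Real.pi)

private lemma sin_approx' {x : ℝ} (hx : |x| ≤ 1) : |Real.sin x - x| ≤ |x| ^ 3 / 3 := by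
  have h := Real.sin_bound hx
  have h4 : |x| ^ 4 ≤ |x| ^ 3 :=
    pow_le_pow_of_le_one (abs_nonneg x) hx (by norm_num)
  have e : Real.sin x - x = (Real.sin x - (x - x ^ 3 / 6)) + (-(x ^ 3 / 6)) := by ring
  have h3 : |(-(x ^ 3 / 6))| = |x| ^ 3 / 6 := by
    rw [abs_neg, abs_div, abs_pow]; norm_num
  calc |Real.sin x - x| = |(Real.sin x - (x - x ^ 3 / 6)) + (-(x ^ 3 / 6))| := by rw [← e]
    _ ≤ |Real.sin x - (x - x ^ 3 / 6)| + |(-(x ^ 3 / 6))| := abs_add_le _ _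
    _ ≤ |x| ^ 4 * (5 / 96) + |x| ^ 3 / 6 := by
      have h45 : |x| ^ 5 ≤ |x| ^ 4 := pow_le_pow_of_le_one (abs_nonneg x) hx (by norm_num)
      have h40 : 0 ≤ |x| ^ 4 := pow_nonneg (abs_nonneg x) 4
      rw [h3]; linarith
    _ ≤ |x| ^ 3 / 3 := by nlinarith [pow_nonneg (abs_nonneg x) 3]

private lemma cos_approx' {x : ℝ} (hx : |x| ≤ 1) : |Real.cos x - 1| ≤ x ^ 2 := by
  have h := Real.cos_bound hx
  have h4 : |x| ^ 4 ≤ |x| ^ 2 :=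
    pow_le_pow_of_le_one (abs_nonneg x) hx (by norm_num)
  have h5 : |x| ^ 2 = x ^ 2 := sq_abs x
  have e : Real.cos x - 1 = (Real.cos x - (1 - x ^ 2 / 2)) + (-(x ^ 2 / 2)) := by ring
  have h3 : |(-(x ^ 2 / 2))| = x ^ 2 / 2 := by
    rw [abs_neg, abs_div, abs_of_nonneg (sq_nonneg x)]; norm_num
  calc |Real.cos x - 1| = |(Real.cos x - (1 - x ^ 2 / 2)) + (-(x ^ 2 / 2))| := by rw [← e]
    _ ≤ |Real.cos x - (1 - x ^ 2 / 2)| + |(-(x ^ 2 / 2))| := abs_add_le _ _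
    _ ≤ |x| ^ 4 * (5 / 96) + x ^ 2 / 2 := by rw [h3]; linarith
    _ ≤ x ^ 2 := by rw [← h5]; nlinarith [pow_nonneg (abs_nonneg x) 2]

private lemma D_bound {z : ℝ} (hz : 0 ≤ z) (hz1 : z ≤ 1) :
    |Real.sin z - z * Real.cos z - z ^ 3 / 3| ≤ z ^ 4 / 4 := by
  have hza : |z| ≤ 1 := by rw [abs_of_nonneg hz]; exact hz1
  have hs := Real.sin_bound hza
  have hc := Real.cos_bound hza
  rw [abs_of_nonneg hz] at hs hc
  have key : Real.sin z - z * Real.cos z - z ^ 3 / 3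
      = (Real.sin z - (z - z ^ 3 / 6)) + (-(z * (Real.cos z - (1 - z ^ 2 / 2)))) := by ring
  have h2 : |(-(z * (Real.cos z - (1 - z ^ 2 / 2))))| = z * |Real.cos z - (1 - z ^ 2 / 2)| := by
    rw [abs_neg, abs_mul, abs_of_nonneg hz]
  have h3 : z * |Real.cos z - (1 - z ^ 2 / 2)| ≤ z ^ 4 * (5 / 96) := by
    calc z * |Real.cos z - (1 - z ^ 2 / 2)| ≤ z * (z ^ 4 * (5 / 96)) :=
          mul_le_mul_of_nonneg_left hc hz
      _ = z ^ 5 * (5 / 96) := by ring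
      _ ≤ z ^ 4 * (5 / 96) := by
          have : z ^ 5 ≤ z ^ 4 := pow_le_pow_of_le_one hz hz1 (by norm_num)
          linarith
  calc |Real.sin z - z * Real.cos z - z ^ 3 / 3|
      = |(Real.sin z - (z - z ^ 3 / 6)) + (-(z * (Real.cos z - (1 - z ^ 2 / 2))))| := by rw [key]
    _ ≤ |Real.sin z - (z - z ^ 3 / 6)| + |(-(z * (Real.cos z - (1 - z ^ 2 / 2))))| := abs_add_le _ _
    _ ≤ z ^ 4 * (5 / 96) + z ^ 4 * (5 / 96) := by
      have h45 : z ^ 5 ≤ z ^ 4 := pow_le_pow_of_le_one hz hz1 (by norm_num)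
      have h40 : 0 ≤ z ^ 4 := pow_nonneg hz 4
      rw [h2]; linarith
    _ ≤ z ^ 4 / 4 := by nlinarith [pow_nonneg hz 4]

/-- Main quantitative bound. -/
private lemma key_bound (a : ℝ) {z : ℝ} (hz : 0 < z) (hz1 : z ≤ 1) (haz : |a| * z ≤ 1) :
    |Real.pi * (Real.cos (z - a * z ^ 2) - Real.cos z)
      - (Real.sin z - z * Real.cos z) - (Real.pi * a - 1 / 3) * z ^ 3|
      ≤ (Real.pi * (a ^ 2 + |a|) + 1) * z ^ 4 := by
  have hpi := Real.pi_pos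
  set w := a * z ^ 2 with hw
  have habs : |w| = |a| * z ^ 2 := by
    rw [hw, abs_mul, abs_pow, abs_of_pos hz]
  have hwz : |w| ≤ z := by
    rw [habs]
    calc |a| * z ^ 2 = (|a| * z) * z := by ring
      _ ≤ 1 * z := mul_le_mul_of_nonneg_right haz hz.le
      _ = z := one_mul z
  have hw1 : |w| ≤ 1 := hwz.trans hz1
  have hz1' : |z| ≤ 1 := by rw [abs_of_pos hz]; exact hz1
  have hcw := cos_approx' hw1
  have hsw := sin_approx' hw1
  have hsz := sin_approx' hz1'
  rw [abs_of_pos hz] at hsz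
  have hcos : Real.cos (z - w) = Real.cos z * Real.cos w + Real.sin z * Real.sin w :=
    Real.cos_sub z w
  have hD := D_bound hz.le hz1
  have hz4 : (0:ℝ) ≤ z ^ 4 := pow_nonneg hz.le 4
  have hz5 : z ^ 5 ≤ z ^ 4 := pow_le_pow_of_le_one hz.le hz1 (by norm_num)
  set T1 := Real.cos z * (Real.cos w - 1) with hT1
  set T2 := Real.sin z * (Real.sin w - w) with hT2
  set T3 := (Real.sin z - z) * w with hT3
  set T4 := Real.sin z - z * Real.cos z - z ^ 3 / 3 with hT4
  have decomp : Real.pi * (Real.cos (z - w) - Real.cos z)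
      - (Real.sin z - z * Real.cos z) - (Real.pi * a - 1 / 3) * z ^ 3
      = Real.pi * T1 + Real.pi * T2 + Real.pi * T3 - T4 := by
    rw [hT1, hT2, hT3, hT4, hcos, hw]; ring
  rw [decomp]
  have hcosz : |Real.cos z| ≤ 1 := Real.abs_cos_le_one z
  have hsinz : |Real.sin z| ≤ 1 := Real.abs_sin_le_one z
  have hw3 : |w| ^ 3 ≤ |a| * z ^ 4 := by
    have e : |w| ^ 3 = (|a| * z) ^ 2 * (|a| * z ^ 4) := by rw [habs]; ring
    rw [e]
    have h0 : 0 ≤ |a| * z ^ 4 := mul_nonneg (abs_nonneg a) hz4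
    have h1 : (|a| * z) ^ 2 ≤ 1 := by
      have := mul_nonneg (abs_nonneg a) hz.le
      nlinarith
    nlinarith
  have b1 : |T1| ≤ a ^ 2 * z ^ 4 := by
    rw [hT1, abs_mul]
    have hw2 : w ^ 2 = a ^ 2 * z ^ 4 := by rw [hw]; ring
    calc |Real.cos z| * |Real.cos w - 1| ≤ 1 * w ^ 2 :=
          mul_le_mul hcosz hcw (abs_nonneg _) zero_le_one
      _ = a ^ 2 * z ^ 4 := by rw [one_mul, hw2]
  have b2 : |T2| ≤ |a| * z ^ 4 / 3 := by
    rw [hT2, abs_mul]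
    calc |Real.sin z| * |Real.sin w - w| ≤ 1 * (|w| ^ 3 / 3) :=
          mul_le_mul hsinz hsw (abs_nonneg _) zero_le_one
      _ = |w| ^ 3 / 3 := one_mul _
      _ ≤ |a| * z ^ 4 / 3 := by linarith
  have b3 : |T3| ≤ |a| * z ^ 4 / 3 := by
    rw [hT3, abs_mul, habs]
    have h1 : |Real.sin z - z| * (|a| * z ^ 2) ≤ (z ^ 3 / 3) * (|a| * z ^ 2) :=
      mul_le_mul_of_nonneg_right hsz (by positivity)
    have h2 : (z ^ 3 / 3) * (|a| * z ^ 2) = |a| * z ^ 5 / 3 := by ring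
    have h3 : |a| * z ^ 5 ≤ |a| * z ^ 4 := mul_le_mul_of_nonneg_left hz5 (abs_nonneg a)
    linarith
  have tri : |Real.pi * T1 + Real.pi * T2 + Real.pi * T3 - T4|
      ≤ Real.pi * |T1| + Real.pi * |T2| + Real.pi * |T3| + |T4| := by
    calc |Real.pi * T1 + Real.pi * T2 + Real.pi * T3 - T4|
        ≤ |Real.pi * T1 + Real.pi * T2 + Real.pi * T3| + |T4| := abs_sub _ _
      _ ≤ |Real.pi * T1 + Real.pi * T2| + |Real.pi * T3| + |T4| := by
          linarith [abs_add_le (Real.pi * T1 + Real.pi * T2) (Real.pi * T3)]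
      _ ≤ |Real.pi * T1| + |Real.pi * T2| + |Real.pi * T3| + |T4| := by
          linarith [abs_add_le (Real.pi * T1) (Real.pi * T2)]
      _ = Real.pi * |T1| + Real.pi * |T2| + Real.pi * |T3| + |T4| := by
          rw [abs_mul Real.pi T1, abs_mul Real.pi T2, abs_mul Real.pi T3, abs_of_pos hpi]
  calc |Real.pi * T1 + Real.pi * T2 + Real.pi * T3 - T4|
      ≤ Real.pi * |T1| + Real.pi * |T2| + Real.pi * |T3| + |T4| := tri
    _ ≤ Real.pi * (a ^ 2 * z ^ 4) + Real.pi * (|a| * z ^ 4 / 3)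
        + Real.pi * (|a| * z ^ 4 / 3) + z ^ 4 / 4 := by gcongr
    _ ≤ (Real.pi * (a ^ 2 + |a|) + 1) * z ^ 4 := by
        nlinarith [mul_nonneg (mul_nonneg hpi.le (abs_nonneg a)) hz4]

private lemma arccos_anti {x y : ℝ} (h : x ≤ y) : Real.arccos y ≤ Real.arccos x := by
  rw [Real.arccos_eq_pi_div_two_sub_arcsin, Real.arccos_eq_pi_div_two_sub_arcsin]
  linarith [Real.monotone_arcsin h]

/-- one-layer case of Corollary 4.2 of the paper.
As `z → 0⁺`, `g z = z − z²/(3π) + o(z²)`; i.e. the function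
`z ↦ g z − (z − z²/(3π))` is `o(z²)` as `z → 0` from the right. -/
theorem g_asymptotic_expansion :
    (fun z : ℝ => g z - (z - z ^ 2 / (3 * Real.pi)))
      =o[nhdsWithin 0 (Set.Ioi 0)] fun z : ℝ => z ^ 2 := by
  have hpi := Real.pi_pos
  rw [isLittleO_iff]
  intro c hc
  set ap : ℝ := 1 / (3 * Real.pi) + c with hap
  set am : ℝ := 1 / (3 * Real.pi) - c with ham
  set K : ℝ := (Real.pi * (ap ^ 2 + |ap|) + 1) + (Real.pi * (am ^ 2 + |am|) + 1) with hK
  have hKpos : 0 < K := by positivity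
  have hSpos : 0 < |ap| + |am| + 1 := by positivity
  set δ : ℝ := min 1 (min (1 / (|ap| + |am| + 1)) (Real.pi * c / K)) with hδ
  have hδpos : 0 < δ := by
    apply lt_min (by norm_num)
    exact lt_min (by positivity) (by positivity)
  filter_upwards [Ioo_mem_nhdsGT hδpos] with z hz
  obtain ⟨hz0, hzδ⟩ := hz
  have hz1 : z ≤ 1 := le_of_lt (lt_of_lt_of_le hzδ (min_le_left _ _))
  have h1 : z < 1 / (|ap| + |am| + 1) :=
    lt_of_lt_of_le hzδ ((min_le_right _ _).trans (min_le_left _ _))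
  have h2 : (|ap| + |am| + 1) * z ≤ 1 := by
    rw [lt_div_iff₀ hSpos] at h1; linarith
  have hza : |ap| * z ≤ 1 := by
    nlinarith [mul_nonneg (abs_nonneg am) hz0.le, hz0.le]
  have hzam : |am| * z ≤ 1 := by
    nlinarith [mul_nonneg (abs_nonneg ap) hz0.le, hz0.le]
  have hzK : z < Real.pi * c / K :=
    lt_of_lt_of_le hzδ ((min_le_right _ _).trans (min_le_right _ _))
  have hzK' : K * z < Real.pi * c := by
    rw [lt_div_iff₀ hKpos] at hzK; linarith
  have kb1 := key_bound ap hz0 hz1 hza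
  have kb2 := key_bound am hz0 hz1 hzam
  have hz3 : 0 < z ^ 3 := pow_pos hz0 3
  have hz4 : (0:ℝ) ≤ z ^ 4 := pow_nonneg hz0.le 4
  have hz4lt : K * z ^ 4 < Real.pi * c * z ^ 3 := by
    calc K * z ^ 4 = (K * z) * z ^ 3 := by ring
      _ < (Real.pi * c) * z ^ 3 := mul_lt_mul_of_pos_right hzK' hz3
  have hKa : (Real.pi * (ap ^ 2 + |ap|) + 1) * z ^ 4 ≤ K * z ^ 4 := by
    have h0 : 0 ≤ Real.pi * (am ^ 2 + |am|) + 1 := by positivity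
    nlinarith
  have hKb : (Real.pi * (am ^ 2 + |am|) + 1) * z ^ 4 ≤ K * z ^ 4 := by
    have h0 : 0 ≤ Real.pi * (ap ^ 2 + |ap|) + 1 := by positivity
    nlinarith
  have hap3 : Real.pi * ap - 1 / 3 = Real.pi * c := by
    rw [hap]; field_simp; ring
  have ham3 : Real.pi * am - 1 / 3 = -(Real.pi * c) := by
    rw [ham]; field_simp; ring
  have sign1 : 0 < Real.pi * (Real.cos (z - ap * z ^ 2) - Real.cos z)
      - (Real.sin z - z * Real.cos z) := by
    have h := (abs_le.mp kb1).1
    rw [hap3] at h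
    linarith
  have sign2 : Real.pi * (Real.cos (z - am * z ^ 2) - Real.cos z)
      - (Real.sin z - z * Real.cos z) < 0 := by
    have h := (abs_le.mp kb2).2
    rw [ham3] at h
    linarith
  set f : ℝ := ((Real.pi - z) * Real.cos z + Real.sin z) / Real.pi with hf
  have hfeq : f = Real.cos z + (Real.sin z - z * Real.cos z) / Real.pi := by
    rw [hf]; field_simp; ring
  have hle1 : f ≤ Real.cos (z - ap * z ^ 2) := by
    rw [hfeq]
    have h : (Real.sin z - z * Real.cos z) / Real.pi
        ≤ Real.cos (z - ap * z ^ 2) - Real.cos z := by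
      rw [div_le_iff₀ hpi]; nlinarith
    linarith
  have hle2 : Real.cos (z - am * z ^ 2) ≤ f := by
    rw [hfeq]
    have h : Real.cos (z - am * z ^ 2) - Real.cos z
        ≤ (Real.sin z - z * Real.cos z) / Real.pi := by
      rw [le_div_iff₀ hpi]; nlinarith
    linarith
  -- θ's in [0, π]
  have hapz : |ap| * z ^ 2 ≤ z := by
    calc |ap| * z ^ 2 = (|ap| * z) * z := by ring
      _ ≤ 1 * z := mul_le_mul_of_nonneg_right hza hz0.le
      _ = z := one_mul z
  have hamz : |am| * z ^ 2 ≤ z := by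
    calc |am| * z ^ 2 = (|am| * z) * z := by ring
      _ ≤ 1 * z := mul_le_mul_of_nonneg_right hzam hz0.le
      _ = z := one_mul z
  have hub_ap : ap * z ^ 2 ≤ |ap| * z ^ 2 :=
    mul_le_mul_of_nonneg_right (le_abs_self ap) (sq_nonneg z)
  have hlb_ap : -(ap * z ^ 2) ≤ |ap| * z ^ 2 := by
    have := mul_le_mul_of_nonneg_right (neg_le_abs ap) (sq_nonneg z)
    linarith [this]
  have hub_am : am * z ^ 2 ≤ |am| * z ^ 2 :=
    mul_le_mul_of_nonneg_right (le_abs_self am) (sq_nonneg z)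
  have hlb_am : -(am * z ^ 2) ≤ |am| * z ^ 2 := by
    have := mul_le_mul_of_nonneg_right (neg_le_abs am) (sq_nonneg z)
    linarith [this]
  have hθm0 : 0 ≤ z - ap * z ^ 2 := by linarith
  have hθmπ : z - ap * z ^ 2 ≤ Real.pi := by
    have := Real.two_le_pi; linarith
  have hθp0 : 0 ≤ z - am * z ^ 2 := by linarith
  have hθpπ : z - am * z ^ 2 ≤ Real.pi := by
    have := Real.two_le_pi; linarith
  have hg1 : g z ≤ z - am * z ^ 2 := by
    show Real.arccos f ≤ _
    calc Real.arccos f ≤ Real.arccos (Real.cos (z - am * z ^ 2)) := arccos_anti hle2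
      _ = z - am * z ^ 2 := Real.arccos_cos hθp0 hθpπ
  have hg2 : z - ap * z ^ 2 ≤ g z := by
    show _ ≤ Real.arccos f
    calc z - ap * z ^ 2 = Real.arccos (Real.cos (z - ap * z ^ 2)) :=
          (Real.arccos_cos hθm0 hθmπ).symm
      _ ≤ Real.arccos f := arccos_anti hle1
  have hamz2 : am * z ^ 2 = z ^ 2 / (3 * Real.pi) - c * z ^ 2 := by rw [ham]; ring
  have hapz2 : ap * z ^ 2 = z ^ 2 / (3 * Real.pi) + c * z ^ 2 := by rw [hap]; ring
  clear_value ap am K δ f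
  rw [Real.norm_eq_abs, Real.norm_eq_abs, abs_le, abs_of_nonneg (sq_nonneg z)]
  constructor <;> [skip; skip]
  · linarith [hg2, hapz2]
  · linarith [hg1, hamz2]
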